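/- Derivative of the solution of a linear ODE system with respect to a parameter: let d ≥ 1 and let A : ℝ × ℝ → Matrix (Fin d) (Fin d) ℂ, (λ, s) ↦ A_λ(s), be continuous with continuous partial derivative ∂A/∂λ. For each λ let Y_λ : [0,1] → Matrix (Fin d) (Fin d) ℂ be the solution of Y_λ'(s) = A_λ(s) · Y_λ(s) with Y_λ(0) = 1 (the identity matrix). Then each Y₀(s) is invertible, and the map λ ↦ Y_λ(1) is differentiable at λ = 0 with derivative Y₀(1) · ∫₀¹ Y₀(s)⁻¹ · (∂A/∂λ)(0, s) · Y₀(s) ds. -/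

import Mathlib

attribute [local instance] Matrix.linftyOpNormedAddCommGroup Matrix.linftyOpNormedRing
  Matrix.linftyOpNormedSpace

attribute [local instance] Matrix.linftyOpNormedAlgebra

open Set Real Matrix

/-- Uniform closeness on the slice `{0} × [0,1]` from continuity on `ℝ × ℝ`. -/
private lemma unif_aux {E : Type*} [NormedAddCommGroup E] (f : ℝ → ℝ → E)
    (hf : Continuous fun q : ℝ × ℝ => f q.1 q.2) {ε : ℝ} (hε : 0 < ε) :
    ∃ δ : ℝ, 0 < δ ∧ δ ≤ 1 ∧ ∀ l : ℝ, |l| ≤ δ → ∀ s ∈ Set.Icc (0:ℝ) 1,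
      ‖f l s - f 0 s‖ ≤ ε := by
  have hcomp : IsCompact ((Set.Icc (-1:ℝ) 1) ×ˢ (Set.Icc (0:ℝ) 1)) :=
    isCompact_Icc.prod isCompact_Icc
  have huc := hcomp.uniformContinuousOn_of_continuous hf.continuousOn
  rw [Metric.uniformContinuousOn_iff] at huc
  obtain ⟨δ₀, hδ₀, h⟩ := huc ε hε
  refine ⟨min (δ₀/2) 1, by positivity, min_le_right _ _, fun l hl s hs => ?_⟩
  have hl1 : |l| ≤ 1 := le_trans hl (min_le_right _ _)
  have hmem : (l, s) ∈ (Set.Icc (-1:ℝ) 1) ×ˢ (Set.Icc (0:ℝ) 1) := ⟨abs_le.1 hl1, hs⟩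
  have hmem0 : ((0:ℝ), s) ∈ (Set.Icc (-1:ℝ) 1) ×ˢ (Set.Icc (0:ℝ) 1) :=
    ⟨by constructor <;> norm_num, hs⟩
  have hdist : dist ((l, s) : ℝ × ℝ) ((0:ℝ), s) < δ₀ := by
    rw [Prod.dist_eq]
    refine max_lt ?_ (by simpa using hδ₀)
    rw [Real.dist_eq, sub_zero]
    exact lt_of_le_of_lt (le_trans hl (min_le_left _ _)) (by linarith)
  have := h _ hmem _ hmem0 hdist
  rw [dist_eq_norm] at this
  exact this.le

private lemma ring_aux {R : Type*} [Ring R] (z x a y0 y1 : R) :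
    z * x * y1 - z * a * y0 = z * (x - a) * y1 + z * a * (y1 - y0) := by noncomm_ring

set_option maxHeartbeats 1000000 in
/-- derivative of the (principal) solution of a linear ODE system
with respect to a parameter. -/
theorem hasDerivAt_solution_wrt_parameter (d : ℕ) (hd : 1 ≤ d)
    (A A' : ℝ → ℝ → Matrix (Fin d) (Fin d) ℂ)
    (hA : Continuous fun q : ℝ × ℝ => A q.1 q.2)
    (hA' : ∀ l s : ℝ, HasDerivAt (fun l' => A l' s) (A' l s) l)
    (hA'cont : Continuous fun q : ℝ × ℝ => A' q.1 q.2)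
    (Y : ℝ → ℝ → Matrix (Fin d) (Fin d) ℂ)
    (hY0 : ∀ l, Y l 0 = 1)
    (hY : ∀ l : ℝ, ∀ s ∈ Set.Icc (0:ℝ) 1, HasDerivAt (Y l) (A l s * Y l s) s) :
    (∀ s ∈ Set.Icc (0:ℝ) 1, IsUnit (Y 0 s)) ∧
    HasDerivAt (fun l => Y l 1)
      (Y 0 1 * ∫ s in (0:ℝ)..1, (Y 0 s)⁻¹ * A' 0 s * Y 0 s) 0 := by
  classical
  haveI : Nonempty (Fin d) := ⟨⟨0, hd⟩⟩
  -- continuity of the solutions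
  have hYcont : ∀ l : ℝ, ContinuousOn (Y l) (Set.Icc (0:ℝ) 1) :=
    fun l s hs => (hY l s hs).continuousAt.continuousWithinAt
  have hAc : ∀ l : ℝ, Continuous fun s => A l s :=
    fun l => hA.comp (continuous_const.prodMk continuous_id)
  have hA'c : ∀ l : ℝ, Continuous fun s => A' l s :=
    fun l => hA'cont.comp (continuous_const.prodMk continuous_id)
  -- a bound for A on [-1,1] × [0,1]
  obtain ⟨K₀, hK₀⟩ := (isCompact_Icc.prod isCompact_Icc :
      IsCompact ((Set.Icc (-1:ℝ) 1) ×ˢ (Set.Icc (0:ℝ) 1))).exists_bound_of_continuousOn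
    hA.continuousOn
  set K : ℝ := max K₀ 1 with hKdef
  have hK1 : (1:ℝ) ≤ K := le_max_right _ _
  have hK0 : (0:ℝ) ≤ K := by linarith
  have hK : ∀ l : ℝ, |l| ≤ 1 → ∀ s ∈ Set.Icc (0:ℝ) 1, ‖A l s‖ ≤ K := by
    intro l hl s hs
    exact le_trans (hK₀ (l, s) ⟨abs_le.1 hl, hs⟩) (le_max_left _ _)
  set CY : ℝ := Real.exp K with hCYdef
  have hCY0 : (0:ℝ) < CY := Real.exp_pos _
  -- Gronwall bound for Y l
  have hYb : ∀ l : ℝ, |l| ≤ 1 → ∀ s ∈ Set.Icc (0:ℝ) 1, ‖Y l s‖ ≤ CY := by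
    intro l hl s hs
    have h := norm_le_gronwallBound_of_norm_deriv_right_le (δ := 1) (K := K) (ε := 0)
      (a := 0) (b := 1) (f := Y l) (f' := fun s => A l s * Y l s)
      (hYcont l)
      (fun t ht => (hY l t (Set.Ico_subset_Icc_self ht)).hasDerivWithinAt)
      (by rw [hY0 l]; simp)
      (fun t ht => by
        have h1 : ‖A l t * Y l t‖ ≤ ‖A l t‖ * ‖Y l t‖ := norm_mul_le _ _
        have h2 : ‖A l t‖ * ‖Y l t‖ ≤ K * ‖Y l t‖ :=
          mul_le_mul_of_nonneg_right (hK l hl t (Set.Ico_subset_Icc_self ht)) (norm_nonneg _)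
        linarith) s hs
    rw [gronwallBound_ε0] at h
    calc ‖Y l s‖ ≤ 1 * Real.exp (K * (s - 0)) := h
      _ ≤ CY := by
        rw [one_mul, hCYdef]
        apply Real.exp_le_exp.2
        nlinarith [hs.1, hs.2]
  -- Gronwall bound for differences
  set Cd : ℝ := CY * Real.exp K with hCddef
  have hCd0 : (0:ℝ) < Cd := by positivity
  have hdiffY : ∀ ε : ℝ, 0 ≤ ε → ∀ l : ℝ, |l| ≤ 1 →
      (∀ s ∈ Set.Icc (0:ℝ) 1, ‖A l s - A 0 s‖ ≤ ε) →
      ∀ s ∈ Set.Icc (0:ℝ) 1, ‖Y l s - Y 0 s‖ ≤ ε * Cd := by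
    intro ε hε l hl hAd s hs
    have h := norm_le_gronwallBound_of_norm_deriv_right_le (δ := 0) (K := K) (ε := ε * CY)
      (a := 0) (b := 1) (f := fun s => Y l s - Y 0 s)
      (f' := fun s => A l s * Y l s - A 0 s * Y 0 s)
      ((hYcont l).sub (hYcont 0))
      (fun t ht => ((hY l t (Set.Ico_subset_Icc_self ht)).sub
        (hY 0 t (Set.Ico_subset_Icc_self ht))).hasDerivWithinAt)
      (by show ‖Y l 0 - Y 0 0‖ ≤ 0; rw [hY0 l, hY0 0, sub_self, norm_zero])
      (fun t ht => by
        show ‖A l t * Y l t - A 0 t * Y 0 t‖ ≤ K * ‖Y l t - Y 0 t‖ + ε * CY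
        have htI := Set.Ico_subset_Icc_self ht
        have he : A l t * Y l t - A 0 t * Y 0 t
            = A l t * (Y l t - Y 0 t) + (A l t - A 0 t) * Y 0 t := by noncomm_ring
        rw [he]
        calc ‖A l t * (Y l t - Y 0 t) + (A l t - A 0 t) * Y 0 t‖
            ≤ ‖A l t * (Y l t - Y 0 t)‖ + ‖(A l t - A 0 t) * Y 0 t‖ := norm_add_le _ _
          _ ≤ K * ‖Y l t - Y 0 t‖ + ε * CY := by
            have h1 : ‖A l t * (Y l t - Y 0 t)‖ ≤ K * ‖Y l t - Y 0 t‖ :=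
              le_trans (norm_mul_le _ _)
                (mul_le_mul_of_nonneg_right (hK l hl t htI) (norm_nonneg _))
            have h2 : ‖(A l t - A 0 t) * Y 0 t‖ ≤ ε * CY :=
              le_trans (norm_mul_le _ _)
                (mul_le_mul (hAd t htI) (hYb 0 (by norm_num) t htI) (norm_nonneg _) hε)
            linarith) s hs
    rw [gronwallBound_of_K_ne_0 (by linarith : K ≠ 0)] at h
    have hexp : Real.exp (K * (s - 0)) - 1 ≤ Real.exp K := by
      have : Real.exp (K * (s - 0)) ≤ Real.exp K := by
        apply Real.exp_le_exp.2; nlinarith [hs.1, hs.2]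
      linarith
    have hdivle : ε * CY / K ≤ ε * CY := div_le_self (by positivity) hK1
    calc ‖Y l s - Y 0 s‖ ≤ 0 * Real.exp (K * (s - 0))
          + ε * CY / K * (Real.exp (K * (s - 0)) - 1) := h
      _ = ε * CY / K * (Real.exp (K * (s - 0)) - 1) := by ring
      _ ≤ ε * CY * Real.exp K := by
          have h1 : (0:ℝ) ≤ Real.exp (K * (s - 0)) - 1 := by
            have : (1:ℝ) ≤ Real.exp (K * (s - 0)) := by
              rw [← Real.exp_zero]; apply Real.exp_le_exp.2; nlinarith [hs.1, hs.2]
            linarith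
          calc ε * CY / K * (Real.exp (K * (s - 0)) - 1)
              ≤ ε * CY * (Real.exp (K * (s - 0)) - 1) :=
                mul_le_mul_of_nonneg_right hdivle h1
            _ ≤ ε * CY * Real.exp K := by
                apply mul_le_mul_of_nonneg_left hexp (by positivity)
      _ = ε * Cd := by rw [hCddef]; ring
  -- injectivity of Y 0 s
  have hinj : ∀ s₀ ∈ Set.Icc (0:ℝ) 1, ∀ v : Fin d → ℂ, (Y 0 s₀) *ᵥ v = 0 → v = 0 := by
    intro s₀ hs₀ v hv
    let L : Matrix (Fin d) (Fin d) ℂ →ₗ[ℝ] (Fin d → ℂ) :=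
      { toFun := fun N => N *ᵥ v
        map_add' := fun P Q => Matrix.add_mulVec P Q v
        map_smul' := fun r P => Matrix.smul_mulVec r P v }
    let Lc : Matrix (Fin d) (Fin d) ℂ →L[ℝ] (Fin d → ℂ) := LinearMap.toContinuousLinearMap L
    set f : ℝ → (Fin d → ℂ) := fun t => (Y 0 (s₀ - t)) *ᵥ v with hfdef
    have hmem : ∀ t ∈ Set.Icc (0:ℝ) s₀, s₀ - t ∈ Set.Icc (0:ℝ) 1 := by
      intro t ht
      constructor
      · linarith [ht.2]
      · linarith [ht.1, hs₀.2]
    have hfc : ContinuousOn f (Set.Icc 0 s₀) := by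
      have : ContinuousOn (fun t => Y 0 (s₀ - t)) (Set.Icc 0 s₀) :=
        (hYcont 0).comp ((continuous_const.sub continuous_id).continuousOn) hmem
      exact Lc.continuous.comp_continuousOn this
    have hf' : ∀ t ∈ Set.Ico (0:ℝ) s₀, HasDerivWithinAt f
        (-((A 0 (s₀ - t) * Y 0 (s₀ - t)) *ᵥ v)) (Set.Ici t) t := by
      intro t ht
      have htI : s₀ - t ∈ Set.Icc (0:ℝ) 1 := hmem t (Set.Ico_subset_Icc_self ht)
      have hh : HasDerivAt (fun u : ℝ => s₀ - u) (-1) t := by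
        simpa using (hasDerivAt_id t).const_sub s₀
      have hYt : HasDerivAt (fun u => Y 0 (s₀ - u))
          ((-1 : ℝ) • (A 0 (s₀ - t) * Y 0 (s₀ - t))) t :=
        (hY 0 (s₀ - t) htI).scomp t hh
      have := Lc.hasFDerivAt.comp_hasDerivAt t hYt
      have h2 : HasDerivAt f (Lc ((-1 : ℝ) • (A 0 (s₀ - t) * Y 0 (s₀ - t)))) t := this
      have h3 : Lc ((-1 : ℝ) • (A 0 (s₀ - t) * Y 0 (s₀ - t)))
          = -((A 0 (s₀ - t) * Y 0 (s₀ - t)) *ᵥ v) := by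
        rw [_root_.map_smul]
        have h4 : Lc (A 0 (s₀ - t) * Y 0 (s₀ - t)) = (A 0 (s₀ - t) * Y 0 (s₀ - t)) *ᵥ v := rfl
        rw [h4]
        simp
      rw [h3] at h2
      exact h2.hasDerivWithinAt
    have hgron := norm_le_gronwallBound_of_norm_deriv_right_le (δ := 0) (K := K) (ε := 0)
      (a := 0) (b := s₀) hfc hf'
      (by
        show ‖(Y 0 (s₀ - 0)) *ᵥ v‖ ≤ 0
        rw [sub_zero, hv, norm_zero])
      (fun t ht => by
        have htI : s₀ - t ∈ Set.Icc (0:ℝ) 1 := hmem t (Set.Ico_subset_Icc_self ht)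
        rw [norm_neg, ← Matrix.mulVec_mulVec]
        calc ‖A 0 (s₀ - t) *ᵥ (Y 0 (s₀ - t) *ᵥ v)‖
            ≤ ‖A 0 (s₀ - t)‖ * ‖Y 0 (s₀ - t) *ᵥ v‖ := Matrix.linfty_opNorm_mulVec _ _
          _ ≤ K * ‖f t‖ + 0 := by
            rw [add_zero]
            exact mul_le_mul_of_nonneg_right (hK 0 (by norm_num) _ htI) (norm_nonneg _))
      s₀ ⟨hs₀.1, le_refl _⟩
    rw [gronwallBound_ε0] at hgron
    have : ‖f s₀‖ ≤ 0 := by simpa using hgron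
    have hfs : f s₀ = v := by
      rw [hfdef]
      simp only [sub_self, hY0 0, Matrix.one_mulVec]
    rw [hfs] at this
    exact norm_le_zero_iff.1 this
  have hunit : ∀ s ∈ Set.Icc (0:ℝ) 1, IsUnit (Y 0 s) := by
    intro s hs
    rw [Matrix.isUnit_iff_isUnit_det, isUnit_iff_ne_zero]
    intro hdet
    obtain ⟨v, hv0, hv⟩ := Matrix.exists_mulVec_eq_zero_iff.2 hdet
    exact hv0 (hinj s hs v hv)
  refine ⟨hunit, ?_⟩
  -- the inverse Z and its derivative
  set Z : ℝ → Matrix (Fin d) (Fin d) ℂ := fun s => (Y 0 s)⁻¹ with hZdef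
  have hdetY : ∀ s ∈ Set.Icc (0:ℝ) 1, IsUnit (Y 0 s).det :=
    fun s hs => (Matrix.isUnit_iff_isUnit_det _).1 (hunit s hs)
  have hZY : ∀ s ∈ Set.Icc (0:ℝ) 1, Z s * Y 0 s = 1 :=
    fun s hs => Matrix.nonsing_inv_mul _ (hdetY s hs)
  have hYZ : ∀ s ∈ Set.Icc (0:ℝ) 1, Y 0 s * Z s = 1 :=
    fun s hs => Matrix.mul_nonsing_inv _ (hdetY s hs)
  have hZd : ∀ s ∈ Set.Icc (0:ℝ) 1, HasDerivAt Z (-(Z s * A 0 s)) s := by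
    intro s hs
    have hu := hunit s hs
    have hcoe : ((hu.unit⁻¹ : (Matrix (Fin d) (Fin d) ℂ)ˣ) : Matrix (Fin d) (Fin d) ℂ) = Z s := by
      rw [Matrix.coe_units_inv, hu.unit_spec]
    have h1 : HasFDerivAt Ring.inverse
        (-ContinuousLinearMap.mulLeftRight ℝ (Matrix (Fin d) (Fin d) ℂ) ((hu.unit⁻¹ : (Matrix (Fin d) (Fin d) ℂ)ˣ) : Matrix (Fin d) (Fin d) ℂ) ((hu.unit⁻¹ : (Matrix (Fin d) (Fin d) ℂ)ˣ) : Matrix (Fin d) (Fin d) ℂ))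
        (Y 0 s) := by
      have h0 := hasFDerivAt_ringInverse (𝕜 := ℝ) hu.unit
      rwa [hu.unit_spec] at h0
    have h2 := h1.comp_hasDerivAt s (hY 0 s hs)
    have heq : Ring.inverse ∘ Y 0 = Z :=
      funext fun t => (Matrix.nonsing_inv_eq_ringInverse _).symm
    rw [heq] at h2
    have h3 : (-ContinuousLinearMap.mulLeftRight ℝ (Matrix (Fin d) (Fin d) ℂ) ((hu.unit⁻¹ : (Matrix (Fin d) (Fin d) ℂ)ˣ) : Matrix (Fin d) (Fin d) ℂ)
        ((hu.unit⁻¹ : (Matrix (Fin d) (Fin d) ℂ)ˣ) : Matrix (Fin d) (Fin d) ℂ)) (A 0 s * Y 0 s) = -(Z s * A 0 s) := by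
      rw [ContinuousLinearMap.neg_apply, ContinuousLinearMap.mulLeftRight_apply, hcoe]
      have : Z s * (A 0 s * Y 0 s) * Z s = Z s * A 0 s * (Y 0 s * Z s) := by noncomm_ring
      rw [this, hYZ s hs, mul_one]
    rw [h3] at h2
    exact h2
  have hZc : ContinuousOn Z (Set.Icc (0:ℝ) 1) :=
    fun s hs => (hZd s hs).continuousAt.continuousWithinAt
  -- bounds for Z and A' 0
  obtain ⟨CZ₀, hCZ₀⟩ := isCompact_Icc.exists_bound_of_continuousOn hZc
  set CZ : ℝ := max CZ₀ 0 with hCZdef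
  have hCZ0 : (0:ℝ) ≤ CZ := le_max_right _ _
  have hCZ : ∀ s ∈ Set.Icc (0:ℝ) 1, ‖Z s‖ ≤ CZ :=
    fun s hs => le_trans (hCZ₀ s hs) (le_max_left _ _)
  obtain ⟨K₁, hK₁⟩ := isCompact_Icc.exists_bound_of_continuousOn
    ((hA'c 0).continuousOn : ContinuousOn (fun s => A' 0 s) (Set.Icc (0:ℝ) 1))
  set K' : ℝ := max K₁ 0 with hK'def
  have hK'0 : (0:ℝ) ≤ K' := le_max_right _ _
  have hK' : ∀ s ∈ Set.Icc (0:ℝ) 1, ‖A' 0 s‖ ≤ K' :=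
    fun s hs => le_trans (hK₁ s hs) (le_max_left _ _)
  -- key integral identity
  have key : ∀ l : ℝ,
      Y l 1 - Y 0 1 = Y 0 1 * ∫ s in (0:ℝ)..1, Z s * (A l s - A 0 s) * Y l s := by
    intro l
    have hderiv : ∀ s ∈ Set.uIcc (0:ℝ) 1, HasDerivAt (fun t => Z t * (Y l t - Y 0 t))
        (Z s * (A l s - A 0 s) * Y l s) s := by
      intro s hs
      rw [Set.uIcc_of_le zero_le_one] at hs
      have h := (hZd s hs).mul ((hY l s hs).sub (hY 0 s hs))
      exact h.congr_deriv (by simp only [Pi.sub_apply]; noncomm_ring)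
    have hcont : ContinuousOn (fun s => Z s * (A l s - A 0 s) * Y l s)
        (Set.uIcc (0:ℝ) 1) := by
      rw [Set.uIcc_of_le zero_le_one]
      exact (hZc.mul (((hAc l).sub (hAc 0)).continuousOn)).mul (hYcont l)
    have hint := hcont.intervalIntegrable (μ := MeasureTheory.volume)
    have hftc := intervalIntegral.integral_eq_sub_of_hasDerivAt hderiv hint
    rw [hY0 l, hY0 0, sub_self, mul_zero, sub_zero] at hftc
    have h1 : (1:ℝ) ∈ Set.Icc (0:ℝ) 1 := ⟨zero_le_one, le_refl _⟩
    calc Y l 1 - Y 0 1 = (Y 0 1 * Z 1) * (Y l 1 - Y 0 1) := by rw [hYZ 1 h1, one_mul]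
      _ = Y 0 1 * (Z 1 * (Y l 1 - Y 0 1)) := by rw [mul_assoc]
      _ = Y 0 1 * ∫ s in (0:ℝ)..1, Z s * (A l s - A 0 s) * Y l s := by rw [hftc]
  -- MVT estimate for difference quotients of A
  have hq : ∀ εq : ℝ, 0 < εq → ∃ δ : ℝ, 0 < δ ∧ δ ≤ 1 ∧ ∀ l : ℝ, l ≠ 0 → |l| ≤ δ →
      ∀ s ∈ Set.Icc (0:ℝ) 1, ‖l⁻¹ • (A l s - A 0 s) - A' 0 s‖ ≤ εq := by
    intro εq hεq
    obtain ⟨δ, hδ0, hδ1, hδ⟩ := unif_aux A' hA'cont hεq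
    refine ⟨δ, hδ0, hδ1, fun l hl0 hl s hs => ?_⟩
    have hmvt : ‖(A l s - l • A' 0 s) - (A 0 s - (0:ℝ) • A' 0 s)‖ ≤ εq * ‖l - 0‖ := by
      apply (convex_Icc (-δ) δ).norm_image_sub_le_of_norm_hasDerivWithin_le
        (f := fun μ => A μ s - μ • A' 0 s) (f' := fun μ => A' μ s - A' 0 s) (C := εq)
      · intro μ hμ
        have h1 : HasDerivAt (fun μ' => A μ' s - μ' • A' 0 s) (A' μ s - A' 0 s) μ := by
          have h2 := (hA' μ s).sub ((hasDerivAt_id μ).smul_const (A' 0 s))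
          exact h2.congr_deriv (by simp)
        exact h1.hasDerivWithinAt
      · intro μ hμ
        exact hδ μ (abs_le.2 ⟨hμ.1, hμ.2⟩) s hs
      · exact ⟨by linarith, by linarith⟩
      · exact abs_le.1 hl
    have hX : (A l s - l • A' 0 s) - (A 0 s - (0:ℝ) • A' 0 s)
        = (A l s - A 0 s) - l • A' 0 s := by
      rw [zero_smul, sub_zero]; abel
    rw [hX] at hmvt
    have heq : l⁻¹ • ((A l s - A 0 s) - l • A' 0 s)
        = l⁻¹ • (A l s - A 0 s) - A' 0 s := by
      rw [smul_sub, smul_smul, inv_mul_cancel₀ hl0, one_smul]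
    rw [← heq, norm_smul, norm_inv, Real.norm_eq_abs]
    have hla : (0:ℝ) < |l| := abs_pos.2 hl0
    rw [sub_zero, Real.norm_eq_abs] at hmvt
    calc |l|⁻¹ * ‖(A l s - A 0 s) - l • A' 0 s‖ ≤ |l|⁻¹ * (εq * |l|) :=
        mul_le_mul_of_nonneg_left hmvt (by positivity)
      _ = εq := by field_simp
  -- the limit of slopes
  refine hasDerivAt_iff_tendsto_slope.2 ?_
  rw [Metric.tendsto_nhdsWithin_nhds]
  intro ε hε
  set C₁ : ℝ := ‖Y 0 1‖ * (CZ * CY + CZ * K' * Cd) with hC₁def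
  have hC₁0 : (0:ℝ) ≤ C₁ := by positivity
  set ε' : ℝ := ε / (C₁ + 1) with hε'def
  have hε' : (0:ℝ) < ε' := by positivity
  obtain ⟨δ₁, hδ₁0, hδ₁1, hδ₁⟩ := hq ε' hε'
  obtain ⟨δ₂, hδ₂0, hδ₂1, hδ₂⟩ := unif_aux A hA hε'
  refine ⟨min δ₁ δ₂, lt_min hδ₁0 hδ₂0, fun l hl hld => ?_⟩
  have hl0 : l ≠ 0 := hl
  rw [Real.dist_eq, sub_zero] at hld
  have hlabs : |l| ≤ min δ₁ δ₂ := hld.le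
  have hl1 : |l| ≤ 1 := le_trans hlabs (le_trans (min_le_left _ _) hδ₁1)
  have hqb : ∀ s ∈ Set.Icc (0:ℝ) 1, ‖l⁻¹ • (A l s - A 0 s) - A' 0 s‖ ≤ ε' :=
    hδ₁ l hl0 (le_trans hlabs (min_le_left _ _))
  have hYd : ∀ s ∈ Set.Icc (0:ℝ) 1, ‖Y l s - Y 0 s‖ ≤ ε' * Cd :=
    hdiffY ε' hε'.le l hl1 (hδ₂ l (le_trans hlabs (min_le_right _ _)))
  -- slope identity
  have hslope : slope (fun l => Y l 1) 0 l
      = Y 0 1 * ∫ s in (0:ℝ)..1, Z s * (l⁻¹ • (A l s - A 0 s)) * Y l s := by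
    rw [slope_def_module, sub_zero, key l, ← mul_smul_comm, ← intervalIntegral.integral_smul]
    congr 1
    funext s
    simp only [smul_mul_assoc, mul_smul_comm]
  rw [dist_eq_norm, hslope]
  -- integrability of the two integrands
  have hI1 := ContinuousOn.intervalIntegrable (μ := MeasureTheory.volume)
      (u := fun s => Z s * (l⁻¹ • (A l s - A 0 s)) * Y l s) (a := 0) (b := 1) (by
    rw [Set.uIcc_of_le zero_le_one]
    exact (hZc.mul ((((hAc l).sub (hAc 0)).const_smul l⁻¹).continuousOn)).mul (hYcont l))
  have hI0 := ContinuousOn.intervalIntegrable (μ := MeasureTheory.volume)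
      (u := fun s => Z s * A' 0 s * Y 0 s) (a := 0) (b := 1) (by
    rw [Set.uIcc_of_le zero_le_one]
    exact (hZc.mul ((hA'c 0).continuousOn)).mul (hYcont 0))
  have hbound : ∀ s ∈ Set.uIoc (0:ℝ) 1,
      ‖Z s * (l⁻¹ • (A l s - A 0 s)) * Y l s - Z s * A' 0 s * Y 0 s‖
        ≤ CZ * ε' * CY + CZ * K' * (ε' * Cd) := by
    intro s hs
    have hsI : s ∈ Set.Icc (0:ℝ) 1 := by
      rw [Set.uIoc_of_le zero_le_one] at hs
      exact Set.Ioc_subset_Icc_self hs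
    rw [ring_aux (Z s) (l⁻¹ • (A l s - A 0 s)) (A' 0 s) (Y 0 s) (Y l s)]
    have b1 : ‖Z s * (l⁻¹ • (A l s - A 0 s) - A' 0 s) * Y l s‖ ≤ CZ * ε' * CY := by
      calc ‖Z s * (l⁻¹ • (A l s - A 0 s) - A' 0 s) * Y l s‖
          ≤ ‖Z s * (l⁻¹ • (A l s - A 0 s) - A' 0 s)‖ * ‖Y l s‖ := norm_mul_le _ _
        _ ≤ (‖Z s‖ * ‖l⁻¹ • (A l s - A 0 s) - A' 0 s‖) * ‖Y l s‖ :=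
            mul_le_mul_of_nonneg_right (norm_mul_le _ _) (norm_nonneg _)
        _ ≤ CZ * ε' * CY := by
            apply mul_le_mul (mul_le_mul (hCZ s hsI) (hqb s hsI) (norm_nonneg _) hCZ0)
              (hYb l hl1 s hsI) (norm_nonneg _) (by positivity)
    have b2 : ‖Z s * A' 0 s * (Y l s - Y 0 s)‖ ≤ CZ * K' * (ε' * Cd) := by
      calc ‖Z s * A' 0 s * (Y l s - Y 0 s)‖
          ≤ ‖Z s * A' 0 s‖ * ‖Y l s - Y 0 s‖ := norm_mul_le _ _
        _ ≤ (‖Z s‖ * ‖A' 0 s‖) * ‖Y l s - Y 0 s‖ :=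
            mul_le_mul_of_nonneg_right (norm_mul_le _ _) (norm_nonneg _)
        _ ≤ CZ * K' * (ε' * Cd) := by
            apply mul_le_mul (mul_le_mul (hCZ s hsI) (hK' s hsI) (norm_nonneg _) hCZ0)
              (hYd s hsI) (norm_nonneg _) (by positivity)
    calc ‖Z s * (l⁻¹ • (A l s - A 0 s) - A' 0 s) * Y l s
          + Z s * A' 0 s * (Y l s - Y 0 s)‖
        ≤ ‖Z s * (l⁻¹ • (A l s - A 0 s) - A' 0 s) * Y l s‖
          + ‖Z s * A' 0 s * (Y l s - Y 0 s)‖ := norm_add_le _ _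
      _ ≤ CZ * ε' * CY + CZ * K' * (ε' * Cd) := add_le_add b1 b2
  calc ‖Y 0 1 * (∫ s in (0:ℝ)..1, Z s * (l⁻¹ • (A l s - A 0 s)) * Y l s)
        - Y 0 1 * ∫ s in (0:ℝ)..1, Z s * A' 0 s * Y 0 s‖
      = ‖Y 0 1 * ∫ s in (0:ℝ)..1,
          (Z s * (l⁻¹ • (A l s - A 0 s)) * Y l s - Z s * A' 0 s * Y 0 s)‖ := by
        rw [intervalIntegral.integral_sub hI1 hI0, mul_sub]
    _ ≤ ‖Y 0 1‖ * ‖∫ s in (0:ℝ)..1,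
          (Z s * (l⁻¹ • (A l s - A 0 s)) * Y l s - Z s * A' 0 s * Y 0 s)‖ := norm_mul_le _ _
    _ ≤ ‖Y 0 1‖ * ((CZ * ε' * CY + CZ * K' * (ε' * Cd)) * |1 - 0|) := by
        apply mul_le_mul_of_nonneg_left
          (intervalIntegral.norm_integral_le_of_norm_le_const hbound) (norm_nonneg _)
    _ = C₁ * ε' := by rw [hC₁def]; rw [show |(1:ℝ) - 0| = 1 by norm_num]; ring
    _ < ε := by
        rw [hε'def]
        rw [mul_div_assoc'] at *
        rw [div_lt_iff₀ (by positivity : (0:ℝ) < C₁ + 1)]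
        nlinarith
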